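/- Let M = (m_{s,t})_{s,t∈S} be a Coxeter matrix over a finite set S whose Coxeter group W_S is finite, whose Coxeter graph Γ_S is connected, and such that for all distinct s,t ∈ S the entry m_{s,t} is either 2 or odd. Let X be a nonempty proper subset of S such that the induced Coxeter graph Γ_X is disconnected. Then the standard parabolic subgroup A_X is not conjugacy stable in the Artin-Tits group A_S. -/

import Mathlib

namespace ArtinTits

variable {B : Type*}

/-- The alternating product `a b a b ⋯` with `m` factors, starting with `a`. -/
def altProd {G : Type*} [Monoid G] (a b : G) : ℕ → G
  | 0 => 1
  | n + 1 => a * altProd b a n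

/-- The braid relations defining the Artin–Tits group of a Coxeter matrix:
`Π(σ_s, σ_t; m_{s,t}) = Π(σ_t, σ_s; m_{s,t})` whenever `m_{s,t} ≠ ∞` (here `∞` is coded by `0`). -/
def artinRelationsSet (M : CoxeterMatrix B) : Set (FreeGroup B) :=
  {r | ∃ s t : B, M s t ≠ 0 ∧
    r = altProd (FreeGroup.of s) (FreeGroup.of t) (M s t) *
        (altProd (FreeGroup.of t) (FreeGroup.of s) (M s t))⁻¹}

/-- The Artin–Tits group of a Coxeter matrix. -/
abbrev ArtinGroup (M : CoxeterMatrix B) : Type _ := PresentedGroup (artinRelationsSet M)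

/-- The standard generator `σ_s` of the Artin–Tits group. -/
def σ (M : CoxeterMatrix B) (s : B) : ArtinGroup M := PresentedGroup.of s

/-- The standard parabolic subgroup `A_X` of the Artin–Tits group. -/
def AP (M : CoxeterMatrix B) (X : Set B) : Subgroup (ArtinGroup M) :=
  Subgroup.closure (σ M '' X)

/-- The standard parabolic subgroup `W_X` of the Coxeter group. -/
def WP (M : CoxeterMatrix B) (X : Set B) : Subgroup M.Group :=
  Subgroup.closure (M.simple '' X)

/-- A subgroup `H ≤ G` is conjugacy stable if any two elements of `H` which are conjugate
in `G` are already conjugate by an element of `H`. -/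
def IsConjugacyStable {G : Type*} [Group G] (H : Subgroup G) : Prop :=
  ∀ a b : G, a ∈ H → b ∈ H → (∃ g : G, g⁻¹ * a * g = b) → ∃ h ∈ H, h⁻¹ * a * h = b

/-- Property `⋆_W` for the pair `(W_X, W_S)`. -/
def StarW (M : CoxeterMatrix B) (X : Set B) : Prop :=
  ∀ Y₁ Y₂ : Set B, Y₁ ⊆ X → Y₂ ⊆ X → ∀ w : M.Group,
    (fun x => w⁻¹ * x * w) '' (M.simple '' Y₁) = M.simple '' Y₂ →
    ∃ v ∈ WP M X, ∀ y ∈ Y₁, v⁻¹ * M.simple y * v = w⁻¹ * M.simple y * w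

/-- Property `⋆_A` for the pair `(A_X, A_S)`. -/
def StarA (M : CoxeterMatrix B) (X : Set B) : Prop :=
  ∀ Y₁ Y₂ : Set B, Y₁ ⊆ X → Y₂ ⊆ X → ∀ g : ArtinGroup M,
    (fun x => g⁻¹ * x * g) '' (σ M '' Y₁) = σ M '' Y₂ →
    ∃ h ∈ AP M X, ∀ y ∈ Y₁, h⁻¹ * σ M y * h = g⁻¹ * σ M y * g

/-- Adjacency in the Coxeter graph: `s` and `t` are joined by an edge iff `m_{s,t} ≥ 3`
(where the value `0` codes `∞`, which also gives an edge). -/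
def Adj (M : CoxeterMatrix B) (s t : B) : Prop := s ≠ t ∧ M s t ≠ 2

/-- `s` and `t` are connected by a path of the Coxeter graph staying inside `X`. -/
def ReachIn (M : CoxeterMatrix B) (X : Set B) (s t : B) : Prop :=
  Relation.ReflTransGen (fun a b => a ∈ X ∧ b ∈ X ∧ Adj M a b) s t

/-- The Coxeter graph induced on `X` is connected. -/
def ConnectedIn (M : CoxeterMatrix B) (X : Set B) : Prop :=
  ∀ s ∈ X, ∀ t ∈ X, ReachIn M X s t

/-- The Coxeter matrix `M` restricted to `X` is of the type of the Coxeter matrix `M'`,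
i.e. there is a bijection transporting one to the other. -/
def IsOfType {B' : Type*} (M : CoxeterMatrix B) (X : Set B) (M' : CoxeterMatrix B') : Prop :=
  ∃ e : X ≃ B', ∀ a b : X, M a.val b.val = M' (e a) (e b)

/-- The Coxeter matrix of type `Bₙ` with the paper's labelling: vertices `0, …, n-1`
(representing `s_1, …, s_n`), `m_{s_1, s_2} = 4` and `m_{s_i, s_{i+1}} = 3` for `i ≥ 2`. -/
def Bmat (n : ℕ) : CoxeterMatrix (Fin n) where
  M := Matrix.of fun i j : Fin n ↦
    if i = j then 1
      else (if (i.val = 0 ∧ j.val = 1) ∨ (j.val = 0 ∧ i.val = 1) then 4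
        else (if (j : ℕ) + 1 = i ∨ (i : ℕ) + 1 = j then 3 else 2))
  isSymm := by unfold Matrix.IsSymm; aesop
  diagonal := by simp
  off_diagonal := by aesop

/-- The Coxeter matrix of type `Dₙ` with the paper's labelling: vertices `0, …, n-1`
(representing `s_1, …, s_n`), with edges `{s_1, s_3}`, `{s_2, s_3}` and `{s_i, s_{i+1}}`
for `i ≥ 3`, all labelled `3`. -/
def Dmat (n : ℕ) : CoxeterMatrix (Fin n) where
  M := Matrix.of fun i j : Fin n ↦
    if i = j then 1
      else (if (i.val = 0 ∧ j.val = 2) ∨ (j.val = 0 ∧ i.val = 2) then 3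
        else (if i.val = 0 ∨ j.val = 0 then 2
          else (if (j : ℕ) + 1 = i ∨ (i : ℕ) + 1 = j then 3 else 2)))
  isSymm := by unfold Matrix.IsSymm; aesop
  diagonal := by simp
  off_diagonal := by aesop

end ArtinTits

namespace ArtinTits

/-! ### Alternating products -/

section AltProd

variable {G : Type*} [Monoid G]

lemma altProd_add_two (a b : G) (n : ℕ) : altProd a b (n + 2) = a * b * altProd a b n := by
  rw [altProd, altProd, mul_assoc]

lemma altProd_even (a b : G) (k : ℕ) : altProd a b (2 * k) = (a * b) ^ k := by
  induction k with
  | zero => simp [altProd]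
  | succ k ih =>
      have h : 2 * (k + 1) = 2 * k + 2 := by ring
      rw [h, altProd_add_two, ih, pow_succ']

lemma altProd_odd (a b : G) (k : ℕ) : altProd a b (2 * k + 1) = (a * b) ^ k * a := by
  induction k with
  | zero => simp [altProd]
  | succ k ih =>
      have h : 2 * (k + 1) + 1 = (2 * k + 1) + 2 := by ring
      rw [h, altProd_add_two, ih, pow_succ']
      simp [mul_assoc]

lemma map_altProd {H : Type*} [Monoid H] (f : G →* H) (a b : G) (n : ℕ) :
    f (altProd a b n) = altProd (f a) (f b) n := by
  induction n generalizing a b with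
  | zero => simp [altProd]
  | succ n ih => simp only [altProd, map_mul, ih]

lemma altProd_comm_of_pow_eq_one {G : Type*} [Group G] {a b : G} (ha : a * a = 1)
    (hb : b * b = 1) {m : ℕ} (h : (a * b) ^ m = 1) : altProd a b m = altProd b a m := by
  have hba : b * a = (a * b)⁻¹ := by
    apply eq_inv_of_mul_eq_one_left
    rw [mul_assoc, ← mul_assoc a a b, ha, one_mul, hb]
  rcases Nat.even_or_odd m with ⟨k, rfl⟩ | ⟨k, rfl⟩
  · have hkk : k + k = 2 * k := by ring
    rw [hkk] at h ⊢
    rw [altProd_even, altProd_even, hba, inv_pow]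
    apply eq_inv_of_mul_eq_one_left
    rw [← pow_add, hkk, h]
  · rw [altProd_odd, altProd_odd]
    have h1 : (a * b) ^ k * (a * b) ^ k * (a * b) = 1 := by
      rw [mul_assoc, ← pow_succ, ← pow_add, show k + (k + 1) = 2 * k + 1 from by ring, h]
    have hPP : (a * b) ^ k * (a * b) ^ k = b * a := by
      rw [hba]; exact eq_inv_of_mul_eq_one_left h1
    have hfin : (a * b) ^ k * ((a * b) ^ k * a) = b := by
      rw [← mul_assoc, hPP, mul_assoc, ha, mul_one]
    rw [hba, inv_pow, eq_inv_mul_iff_mul_eq]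
    exact hfin

end AltProd

/-! ### Braid relations and conjugation in the Artin group -/

section ArtinConj

variable {B : Type*}

lemma artin_braid (M : CoxeterMatrix B) {s t : B} (h0 : M s t ≠ 0) :
    altProd (σ M s) (σ M t) (M s t) = altProd (σ M t) (σ M s) (M s t) := by
  have hr : (altProd (FreeGroup.of s) (FreeGroup.of t) (M s t) *
      (altProd (FreeGroup.of t) (FreeGroup.of s) (M s t))⁻¹) ∈ artinRelationsSet M :=
    ⟨s, t, h0, rfl⟩
  have h1 : PresentedGroup.mk (artinRelationsSet M)
      (altProd (FreeGroup.of s) (FreeGroup.of t) (M s t) *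
        (altProd (FreeGroup.of t) (FreeGroup.of s) (M s t))⁻¹) = 1 :=
    (QuotientGroup.eq_one_iff _).mpr (Subgroup.subset_normalClosure hr)
  rw [map_mul, map_inv, mul_inv_eq_one, map_altProd, map_altProd] at h1
  exact h1

lemma conj_step (M : CoxeterMatrix B) {a b : B} (hodd : Odd (M a b)) :
    ∃ g : ArtinGroup M, g⁻¹ * σ M a * g = σ M b := by
  obtain ⟨k, hk⟩ := hodd
  have h0 : M a b ≠ 0 := by omega
  have hbr := artin_braid M h0
  rw [hk, altProd_odd, altProd_odd] at hbr
  set x := σ M a with hx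
  set y := σ M b with hy
  refine ⟨(x * y) ^ k * x, ?_⟩
  have hsc : x * (y * x) ^ k = (x * y) ^ k * x :=
    (SemiconjBy.pow_right (by rw [SemiconjBy, mul_assoc]) k)
  have hmain : x * ((x * y) ^ k * x) = ((x * y) ^ k * x) * y := by
    conv_lhs => rw [hbr]
    rw [← mul_assoc, hsc]
  rw [mul_assoc, hmain]
  group

lemma conj_of_reach (M : CoxeterMatrix B)
    (hodd : ∀ s t : B, s ≠ t → M s t = 2 ∨ Odd (M s t)) {a b : B}
    (h : ReachIn M Set.univ a b) : ∃ g : ArtinGroup M, g⁻¹ * σ M a * g = σ M b := by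
  induction h with
  | refl => exact ⟨1, by simp⟩
  | tail hab hbc ih =>
      obtain ⟨g, hg⟩ := ih
      obtain ⟨-, -, hne, hm2⟩ := hbc
      have hoddm := (hodd _ _ hne).resolve_left hm2
      obtain ⟨g', hg'⟩ := conj_step M hoddm
      refine ⟨g * g', ?_⟩
      rw [← hg', ← hg]
      group

end ArtinConj

end ArtinTits

/-! ### The reflection representation of the Artin group -/

namespace ArtinTits

section Rep

open Real

variable {B : Type*} [Fintype B] [DecidableEq B] (M : CoxeterMatrix B)

set_option linter.unusedSectionVars false

/-- Entries of the cosine matrix. -/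
noncomputable def cE (s t : B) : ℝ := -Real.cos (Real.pi / (M s t))

lemma cE_self (s : B) : cE M s s = 1 := by
  simp [cE, M.diagonal]

lemma cE_two {s t : B} (h : M s t = 2) : cE M s t = 0 := by
  simp [cE, h]

lemma cE_symm (s t : B) : cE M s t = cE M t s := by
  rw [cE, cE, M.symmetric]

/-- Basis vector. -/
def eV [DecidableEq B] (s : B) : B → ℝ := Pi.single s 1

/-- The bilinear pairing of `e_s` with a vector. -/
noncomputable def kil (s : B) (v : B → ℝ) : ℝ := ∑ y, cE M s y * v y

lemma kil_add (s : B) (v w : B → ℝ) : kil M s (v + w) = kil M s v + kil M s w := by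
  simp [kil, mul_add, Finset.sum_add_distrib]

lemma kil_sub (s : B) (v w : B → ℝ) : kil M s (v - w) = kil M s v - kil M s w := by
  simp [kil, mul_sub, Finset.sum_sub_distrib]

lemma kil_smul (s : B) (c : ℝ) (v : B → ℝ) : kil M s (c • v) = c * kil M s v := by
  rw [kil, kil, Finset.mul_sum]
  exact Finset.sum_congr rfl fun y _ => by simp [smul_eq_mul]; ring

lemma kil_single (s y : B) : kil M s (eV y) = cE M s y := by
  rw [kil]
  simp only [eV]
  rw [Finset.sum_eq_single y]
  · simp

  · intro b _ hb
    simp [eV, Pi.single_eq_of_ne hb]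
  · simp

/-- The reflection associated to a generator. -/
noncomputable def rE (s : B) : Module.End ℝ (B → ℝ) where
  toFun v := v - (2 * kil M s v) • eV s
  map_add' v w := by rw [kil_add]; module
  map_smul' c v := by rw [kil_smul]; simp only [RingHom.id_apply]; module

lemma rE_apply (s : B) (v : B → ℝ) : rE M s v = v - (2 * kil M s v) • eV s := rfl

lemma kil_rE (s : B) (v : B → ℝ) : kil M s (rE M s v) = - kil M s v := by
  rw [rE_apply, kil_sub, kil_smul, kil_single, cE_self]; ring

lemma rE_rE (s : B) (v : B → ℝ) : rE M s (rE M s v) = v := by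
  rw [rE_apply M s (rE M s v), kil_rE, rE_apply]; module

/-- The reflection as a unit of the endomorphism ring. -/
noncomputable def rU (s : B) : (Module.End ℝ (B → ℝ))ˣ :=
  ⟨rE M s, rE M s,
    LinearMap.ext fun v => by rw [Module.End.mul_apply, Module.End.one_apply, rE_rE],
    LinearMap.ext fun v => by rw [Module.End.mul_apply, Module.End.one_apply, rE_rE]⟩

lemma rU_val (s : B) : ((rU M s : (Module.End ℝ (B → ℝ))ˣ) : Module.End ℝ (B → ℝ)) = rE M s :=
  rfl

lemma rU_inv (s : B) : (rU M s)⁻¹ = rU M s := rfl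

lemma rU_mul_self (s : B) : rU M s * rU M s = 1 := by
  nth_rewrite 1 [← rU_inv M s]
  exact inv_mul_cancel _

end Rep

end ArtinTits

/-! ### The dihedral computation -/

namespace ArtinTits

section Dihedral

open Real

variable {B : Type*} [Fintype B] [DecidableEq B] (M : CoxeterMatrix B)

set_option linter.unusedSectionVars false

lemma sin_rec (θ x : ℝ) :
    Real.sin ((x + 2) * θ) = 2 * Real.cos θ * Real.sin ((x + 1) * θ) - Real.sin (x * θ) := by
  have h1 : (x + 2) * θ = (x + 1) * θ + θ := by ring
  have h2 : x * θ = (x + 1) * θ - θ := by ring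
  rw [h1, h2, Real.sin_add, Real.sin_sub]
  ring

lemma rE_step (s t : B) (a b : ℝ) :
    (rE M s * rE M t : Module.End ℝ (B → ℝ)) (a • eV s + b • eV t)
      = ((4 * cE M s t ^ 2 - 1) * a + 2 * cE M s t * b) • eV s
        + (-(2 * cE M s t * a) - b) • eV t := by
  have h1 : kil M t (a • eV s + b • eV t) = a * cE M s t + b := by
    rw [kil_add, kil_smul, kil_smul, kil_single, kil_single, cE_self, ← cE_symm]; ring
  have h2 : rE M t (a • eV s + b • eV t)
      = a • eV s + (-(2 * cE M s t * a) - b) • eV t := by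
    rw [rE_apply, h1]; module
  have h3 : kil M s (a • eV s + (-(2 * cE M s t * a) - b) • eV t)
      = a + (-(2 * cE M s t * a) - b) * cE M s t := by
    rw [kil_add, kil_smul, kil_smul, kil_single, kil_single, cE_self]; ring
  rw [Module.End.mul_apply, h2, rE_apply, h3]
  module

lemma rE_pow_single {s t : B} {m : ℕ} (hm : 2 ≤ m) (hst : M s t = m) (n : ℕ) :
    (((rE M s * rE M t : Module.End ℝ (B → ℝ)) ^ n) (eV s)
        = (Real.sin ((2 * (n:ℝ) + 1) * (π / m)) / Real.sin (π / m)) • eV s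
          + (Real.sin ((2 * (n:ℝ)) * (π / m)) / Real.sin (π / m)) • eV t)
      ∧ (((rE M s * rE M t : Module.End ℝ (B → ℝ)) ^ n) (eV t)
        = (-(Real.sin ((2 * (n:ℝ)) * (π / m)) / Real.sin (π / m))) • eV s
          + (-(Real.sin ((2 * (n:ℝ) - 1) * (π / m)) / Real.sin (π / m))) • eV t) := by
  have hm0 : (0:ℝ) < (m:ℝ) := by exact_mod_cast (by omega : 0 < m)
  have hθpos : 0 < π / m := div_pos pi_pos hm0
  have hθlt : π / m < π := by
    have h2 : π / (m:ℝ) ≤ π / 2 := by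
      rw [div_le_div_iff_of_pos_left pi_pos hm0 two_pos]
      exact_mod_cast hm
    linarith [pi_pos]
  have hsin : Real.sin (π / m) ≠ 0 := ne_of_gt (Real.sin_pos_of_pos_of_lt_pi hθpos hθlt)
  have hcos : cE M s t = -Real.cos (π / m) := by rw [cE, hst]
  have key : ∀ x : ℝ, Real.sin ((x + 2) * (π / m)) / Real.sin (π / m)
      = 2 * Real.cos (π / m) * (Real.sin ((x + 1) * (π / m)) / Real.sin (π / m))
        - Real.sin (x * (π / m)) / Real.sin (π / m) := by
    intro x; rw [sin_rec]; ring
  induction n with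
  | zero =>
      constructor
      · have c1 : (2 * ((0:ℕ):ℝ) + 1) * (π / m) = π / m := by norm_num
        have c2 : (2 * ((0:ℕ):ℝ)) * (π / m) = 0 := by norm_num
        rw [pow_zero, Module.End.one_apply, c1, c2, Real.sin_zero, zero_div,
          div_self hsin, one_smul, zero_smul, add_zero]
      · have c2 : (2 * ((0:ℕ):ℝ)) * (π / m) = 0 := by norm_num
        have c3 : (2 * ((0:ℕ):ℝ) - 1) * (π / m) = -(π / m) := by push_cast; ring
        rw [pow_zero, Module.End.one_apply, c2, c3, Real.sin_neg, Real.sin_zero, zero_div,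
          neg_div, neg_neg, div_self hsin, neg_zero, zero_smul, one_smul, zero_add]
  | succ n ih =>
      obtain ⟨ih1, ih2⟩ := ih
      have g1 : Real.sin ((2 * ((n:ℕ):ℝ) + 1 + 1) * (π / m))
          = Real.sin ((2 * (n:ℝ) + 2) * (π / m)) := by congr 1; ring
      have g2 : Real.sin ((2 * (n:ℝ) - 1 + 1) * (π / m))
          = Real.sin ((2 * (n:ℝ)) * (π / m)) := by congr 1; ring
      constructor
      · have hA : (4 * cE M s t ^ 2 - 1)
              * (Real.sin ((2 * (n:ℝ) + 1) * (π / m)) / Real.sin (π / m))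
            + 2 * cE M s t * (Real.sin ((2 * (n:ℝ)) * (π / m)) / Real.sin (π / m))
            = Real.sin ((2 * ((n:ℝ) + 1) + 1) * (π / m)) / Real.sin (π / m) := by
          have e1 : Real.sin ((2 * ((n:ℝ) + 1) + 1) * (π / m))
              = Real.sin ((2 * (n:ℝ) + 1 + 2) * (π / m)) := by congr 1; ring
          rw [e1, key (2 * (n:ℝ) + 1), g1, key (2 * (n:ℝ)), hcos]
          ring
        have hB : -(2 * cE M s t * (Real.sin ((2 * (n:ℝ) + 1) * (π / m)) / Real.sin (π / m)))
              - Real.sin ((2 * (n:ℝ)) * (π / m)) / Real.sin (π / m)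
            = Real.sin ((2 * ((n:ℝ) + 1)) * (π / m)) / Real.sin (π / m) := by
          have e2 : Real.sin ((2 * ((n:ℝ) + 1)) * (π / m))
              = Real.sin ((2 * (n:ℝ) + 2) * (π / m)) := by congr 1; ring
          rw [e2, key (2 * (n:ℝ)), hcos]
          ring
        rw [pow_succ', Module.End.mul_apply, ih1, rE_step, hA, hB]
        push_cast
        rfl
      · have hA : (4 * cE M s t ^ 2 - 1)
              * (-(Real.sin ((2 * (n:ℝ)) * (π / m)) / Real.sin (π / m)))
            + 2 * cE M s t * (-(Real.sin ((2 * (n:ℝ) - 1) * (π / m)) / Real.sin (π / m)))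
            = -(Real.sin ((2 * ((n:ℝ) + 1)) * (π / m)) / Real.sin (π / m)) := by
          have e2 : Real.sin ((2 * ((n:ℝ) + 1)) * (π / m))
              = Real.sin ((2 * (n:ℝ) + 2) * (π / m)) := by congr 1; ring
          have e5 : Real.sin ((2 * (n:ℝ) + 1) * (π / m))
              = Real.sin ((2 * (n:ℝ) - 1 + 2) * (π / m)) := by congr 1; ring
          rw [e2, key (2 * (n:ℝ)), e5, key (2 * (n:ℝ) - 1), g2, hcos]
          ring
        have hB : -(2 * cE M s t * (-(Real.sin ((2 * (n:ℝ)) * (π / m)) / Real.sin (π / m))))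
              - -(Real.sin ((2 * (n:ℝ) - 1) * (π / m)) / Real.sin (π / m))
            = -(Real.sin ((2 * ((n:ℝ) + 1) - 1) * (π / m)) / Real.sin (π / m)) := by
          have e4 : Real.sin ((2 * ((n:ℝ) + 1) - 1) * (π / m))
              = Real.sin ((2 * (n:ℝ) - 1 + 2) * (π / m)) := by congr 1; ring
          rw [e4, key (2 * (n:ℝ) - 1), g2, hcos]
          ring
        rw [pow_succ', Module.End.mul_apply, ih2, rE_step, hA, hB]
        push_cast
        rfl

lemma rE_mul_pow_eq_one {s t : B} {m : ℕ} (hm : 2 ≤ m) (hst : M s t = m) :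
    (rE M s * rE M t : Module.End ℝ (B → ℝ)) ^ m = 1 := by
  have hm0 : (0:ℝ) < (m:ℝ) := by exact_mod_cast (by omega : 0 < m)
  have hθpos : 0 < π / m := div_pos pi_pos hm0
  have hθlt : π / m < π := by
    have h2 : π / (m:ℝ) ≤ π / 2 := by
      rw [div_le_div_iff_of_pos_left pi_pos hm0 two_pos]
      exact_mod_cast hm
    linarith [pi_pos]
  have hsin : Real.sin (π / m) ≠ 0 := ne_of_gt (Real.sin_pos_of_pos_of_lt_pi hθpos hθlt)
  have hcos : cE M s t = -Real.cos (π / m) := by rw [cE, hst]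
  -- endpoint values
  have hc1 : Real.sin ((2 * (m:ℝ) + 1) * (π / m)) = Real.sin (π / m) := by
    have : (2 * (m:ℝ) + 1) * (π / m) = π / m + 2 * π := by
      field_simp
      ring
    rw [this, Real.sin_add_two_pi]
  have hc2 : Real.sin ((2 * (m:ℝ)) * (π / m)) = 0 := by
    have : (2 * (m:ℝ)) * (π / m) = 2 * π := by field_simp
    rw [this, Real.sin_two_pi]
  have hc3 : Real.sin ((2 * (m:ℝ) - 1) * (π / m)) = -Real.sin (π / m) := by
    have : (2 * (m:ℝ) - 1) * (π / m) = 2 * π - π / m := by field_simp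
    rw [this, Real.sin_sub, Real.sin_two_pi, Real.cos_two_pi]
    ring
  have hes : ((rE M s * rE M t : Module.End ℝ (B → ℝ)) ^ m) (eV s) = eV s := by
    rw [(rE_pow_single M hm hst m).1, hc1, hc2, div_self hsin, zero_div, one_smul,
      zero_smul, add_zero]
  have het : ((rE M s * rE M t : Module.End ℝ (B → ℝ)) ^ m) (eV t) = eV t := by
    rw [(rE_pow_single M hm hst m).2, hc2, hc3, zero_div, neg_div, neg_neg, div_self hsin,
      neg_zero, zero_smul, one_smul, zero_add]
  -- decomposition of an arbitrary vector
  have hden : 1 - cE M s t ^ 2 ≠ 0 := by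
    have h1 : 1 - cE M s t ^ 2 = Real.sin (π / m) ^ 2 := by
      rw [hcos]
      linear_combination -Real.sin_sq_add_cos_sq (π / m)
    rw [h1]
    exact pow_ne_zero 2 hsin
  apply LinearMap.ext; intro v
  obtain ⟨ζ, η, hzs, hzt⟩ : ∃ ζ η : ℝ, kil M s (v - ζ • eV s - η • eV t) = 0 ∧
      kil M t (v - ζ • eV s - η • eV t) = 0 := by
    refine ⟨(kil M s v - cE M s t * kil M t v) / (1 - cE M s t ^ 2),
      (kil M t v - cE M s t * kil M s v) / (1 - cE M s t ^ 2), ?_, ?_⟩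
    · rw [kil_sub, kil_sub, kil_smul, kil_smul, kil_single, kil_single, cE_self]
      field_simp [hden]
      ring
    · rw [kil_sub, kil_sub, kil_smul, kil_smul, kil_single, kil_single, cE_self, ← cE_symm M s t]
      field_simp [hden]
      ring
  set z := v - ζ • eV s - η • eV t with hzdef
  have h1 : rE M t z = z := by
    rw [rE_apply, hzt, mul_zero, zero_smul, sub_zero]
  have h2 : rE M s z = z := by
    rw [rE_apply, hzs, mul_zero, zero_smul, sub_zero]
  have hfix : ∀ k : ℕ, ((rE M s * rE M t : Module.End ℝ (B → ℝ)) ^ k) z = z := by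
    intro k
    induction k with
    | zero => rw [pow_zero, Module.End.one_apply]
    | succ k ih =>
        rw [pow_succ, Module.End.mul_apply, Module.End.mul_apply, h1, h2, ih]
  have hv : v = ζ • eV s + η • eV t + z := by
    rw [hzdef]; module
  rw [Module.End.one_apply, hv, map_add, map_add, map_smul, map_smul, hes, het, hfix m]

lemma relations_hold : ∀ r ∈ artinRelationsSet M, FreeGroup.lift (fun b => rU M b) r = 1 := by
  rintro r ⟨s, t, h0, rfl⟩
  rw [map_mul, map_inv, map_altProd, map_altProd, FreeGroup.lift_apply_of, FreeGroup.lift_apply_of,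
    mul_inv_eq_one]
  apply altProd_comm_of_pow_eq_one (rU_mul_self M s) (rU_mul_self M t)
  by_cases hst : s = t
  · subst hst
    rw [rU_mul_self M s, one_pow]
  · have h1 : M s t ≠ 1 := M.off_diagonal s t hst
    have hm : 2 ≤ M s t := by omega
    apply Units.ext
    rw [Units.val_pow_eq_pow_val, Units.val_mul, rU_val, rU_val, Units.val_one]
    exact rE_mul_pow_eq_one M hm rfl

/-- The geometric representation of the Artin group. -/
noncomputable def rho : ArtinGroup M →* (Module.End ℝ (B → ℝ))ˣ :=
  PresentedGroup.toGroup (relations_hold M)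

lemma rho_of (s : B) : rho M (σ M s) = rU M s :=
  PresentedGroup.toGroup.of (relations_hold M)

end Dihedral

end ArtinTits



namespace ArtinTits

/-- Section 4.1 of the paper: if every entry of the Coxeter matrix off the diagonal is `2` or
odd (i.e. every edge of the Coxeter graph has an odd label) and the induced Coxeter graph on
`X` is disconnected, then `A_X` is not conjugacy stable in `A_S`. -/
theorem not_conjugacy_stable_of_disconnected_all_odd
    {B : Type*} [Finite B] (M : CoxeterMatrix B) [Finite M.Group]
    (hconn : ConnectedIn M Set.univ)
    (hodd : ∀ s t : B, s ≠ t → M s t = 2 ∨ Odd (M s t))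
    (X : Set B) (hX : X.Nonempty) (hXproper : X ≠ Set.univ)
    (hXdisconn : ¬ ConnectedIn M X) :
    ¬ IsConjugacyStable (AP M X) := by
  classical
  have : Fintype B := Fintype.ofFinite B
  intro hstab
  -- two points of `X` not connected within `X`
  unfold ConnectedIn at hXdisconn
  push_neg at hXdisconn
  obtain ⟨s, hsX, t, htX, hnr⟩ := hXdisconn
  -- the component of `s` in `Γ_X`
  set X₁ : Set B := {x | x ∈ X ∧ ReachIn M X s x} with hX₁
  have hs1 : s ∈ X₁ := ⟨hsX, Relation.ReflTransGen.refl⟩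
  have ht1 : t ∉ X₁ := fun h => hnr h.2
  have htwo : ∀ x ∈ X, x ∉ X₁ → ∀ y, y ∈ X₁ → M x y = 2 := by
    intro x hx hx1 y hy
    by_contra hne2
    have hxy : y ≠ x := fun h => hx1 (h ▸ hy)
    have hr : ReachIn M X s x :=
      Relation.ReflTransGen.tail hy.2 ⟨hy.1, hx, hxy, by rwa [M.symmetric y x]⟩
    exact hx1 ⟨hx, hr⟩
  -- support predicate: vectors supported on the component `X₁`
  set Supp : (B → ℝ) → Prop := fun v => ∀ b, b ∉ X₁ → v b = 0 with hSupp
  have hgen : ∀ x ∈ X, ∀ v, Supp v → Supp (rE M x v) := by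
    intro x hx v hv b hb
    rw [rE_apply]
    simp only [Pi.sub_apply, Pi.smul_apply, smul_eq_mul]
    by_cases hx1 : x ∈ X₁
    · have hbx : b ≠ x := fun h => hb (h ▸ hx1)
      rw [hv b hb, eV, Pi.single_eq_of_ne hbx, mul_zero, sub_zero]
    · have hk : kil M x v = 0 := by
        apply Finset.sum_eq_zero
        intro y _
        by_cases hy1 : y ∈ X₁
        · rw [cE_two M (htwo x hx hx1 y hy1), zero_mul]
        · rw [hv y hy1, mul_zero]
      rw [hv b hb, hk, mul_zero, zero_mul, sub_zero]
  -- elements of `ρ(A_X)` preserve the support condition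
  have hAP : ∀ a : ArtinGroup M, a ∈ AP M X →
      (∀ v, Supp v → Supp (((rho M a : (Module.End ℝ (B → ℝ))ˣ) :
          Module.End ℝ (B → ℝ)) v)) ∧
      (∀ v, Supp v → Supp ((((rho M a)⁻¹ : (Module.End ℝ (B → ℝ))ˣ) :
          Module.End ℝ (B → ℝ)) v)) := by
    intro a ha
    induction ha using Subgroup.closure_induction with
    | mem g hg =>
        obtain ⟨x, hxX, rfl⟩ := hg
        constructor
        · intro v hv
          rw [rho_of, rU_val]
          exact hgen x hxX v hv
        · intro v hv
          rw [rho_of, rU_inv, rU_val]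
          exact hgen x hxX v hv
    | one =>
        constructor <;> intro v hv <;>
          simp only [map_one, inv_one, Units.val_one, Module.End.one_apply] <;> exact hv
    | mul g₁ g₂ hg₁ hg₂ ih₁ ih₂ =>
        constructor
        · intro v hv
          rw [map_mul, Units.val_mul, Module.End.mul_apply]
          exact ih₁.1 _ (ih₂.1 v hv)
        · intro v hv
          rw [map_mul, mul_inv_rev, Units.val_mul, Module.End.mul_apply]
          exact ih₂.2 _ (ih₁.2 v hv)
    | inv g hg ih =>
        constructor
        · intro v hv
          rw [map_inv]
          exact ih.2 v hv
        · intro v hv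
          rw [map_inv, inv_inv]
          exact ih.1 v hv
  -- σ s and σ t are conjugate in the Artin group
  have hreach : ReachIn M Set.univ s t := hconn s (Set.mem_univ s) t (Set.mem_univ t)
  obtain ⟨g, hg⟩ := conj_of_reach M hodd hreach
  have hmem_s : σ M s ∈ AP M X := Subgroup.subset_closure ⟨s, hsX, rfl⟩
  have hmem_t : σ M t ∈ AP M X := Subgroup.subset_closure ⟨t, htX, rfl⟩
  obtain ⟨h, hhAP, hconj⟩ := hstab (σ M s) (σ M t) hmem_s hmem_t ⟨g, hg⟩
  -- push the conjugation to the reflection representation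
  have hrep : ((rho M h)⁻¹ * rU M s * rho M h : (Module.End ℝ (B → ℝ))ˣ) = rU M t := by
    rw [← rho_of M s, ← rho_of M t, ← map_inv, ← map_mul, ← map_mul, hconj]
  set G := ((rho M h : (Module.End ℝ (B → ℝ))ˣ) : Module.End ℝ (B → ℝ)) with hGdef
  set Gi := (((rho M h)⁻¹ : (Module.End ℝ (B → ℝ))ˣ) : Module.End ℝ (B → ℝ)) with hGidef
  have hend : Gi * rE M s * G = rE M t := by
    have h2 := congrArg (Units.val) hrep
    rwa [Units.val_mul, Units.val_mul, rU_val, rU_val] at h2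
  have hGiG : ∀ v, Gi (G v) = v := by
    intro v
    have h1 : (rho M h)⁻¹ * rho M h = 1 := inv_mul_cancel _
    have h2 := congrArg Units.val h1
    rw [Units.val_mul, Units.val_one] at h2
    calc Gi (G v) = (Gi * G) v := rfl
    _ = v := by rw [hGidef, hGdef, h2, Module.End.one_apply]
  -- evaluate the conjugation identity at `e_t`, coordinate `t`
  have hL : (Gi * rE M s * G) (eV t) = eV t - (2 * kil M s (G (eV t))) • Gi (eV s) := by
    rw [Module.End.mul_apply, Module.End.mul_apply, rE_apply, map_sub, LinearMap.map_smul, hGiG]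
  have hsupp_beta : Supp (Gi (eV s)) := by
    apply (hAP h hhAP).2
    intro b hb
    have hbs : b ≠ s := fun e => hb (e ▸ hs1)
    exact Pi.single_eq_of_ne hbs 1
  have hbt : Gi (eV s) t = 0 := hsupp_beta t ht1
  have hLt : (Gi * rE M s * G) (eV t) t = 1 := by
    rw [hL]
    simp only [Pi.sub_apply, Pi.smul_apply, smul_eq_mul]
    rw [hbt, mul_zero, sub_zero, eV, Pi.single_eq_same]
  have hRt : (rE M t) (eV t) t = -1 := by
    rw [rE_apply, kil_single, cE_self]
    simp only [Pi.sub_apply, Pi.smul_apply, smul_eq_mul]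
    rw [eV, Pi.single_eq_same]
    norm_num
  rw [hend, hRt] at hLt
  norm_num at hLt

end ArtinTits
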